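/- For every real number x ≥ 1, ζ(3/2 + x)² ≤ (8/5)·2^{−x} + 1, where ζ is the Riemann zeta function. -/

import Mathlib

open Real Finset


/-- numeric helper : (2/n)^(5/2) ≤ q when 32 ≤ q² n⁵ -/
lemma numeric_helper {n q : ℝ} (hn : 0 < n) (hq : 0 ≤ q) (h : 32 ≤ q ^ 2 * n ^ 5) :
    (2 / n) ^ ((5 : ℝ) / 2) ≤ q := by
  have ha : (0:ℝ) ≤ 2 / n := by positivity
  have hx : (0:ℝ) ≤ (2 / n) ^ ((5:ℝ)/2) := Real.rpow_nonneg ha _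
  have h1 : ((2 / n) ^ ((5:ℝ)/2)) ^ 2 = (2 / n) ^ (5 : ℕ) := by
    rw [← Real.rpow_natCast ((2 / n) ^ ((5:ℝ)/2)) 2, ← Real.rpow_mul ha,
      ← Real.rpow_natCast (2 / n) 5]
    norm_num
  have h2 : (2 / n) ^ (5 : ℕ) = 32 / n ^ 5 := by
    rw [div_pow]; norm_num
  have h3 : ((2 / n) ^ ((5:ℝ)/2)) ^ 2 ≤ q ^ 2 := by
    rw [h1, h2, div_le_iff₀ (by positivity)]; linarith
  nlinarith [hx, hq]

/-- single term bound: n^(-s) ≤ q·2^(-s) -/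
lemma term_bound {s : ℝ} (hs : 5/2 ≤ s) {n q : ℝ} (hn : 2 ≤ n)
    (hq : (2 / n) ^ ((5 : ℝ) / 2) ≤ q) : n ^ (-s) ≤ q * 2 ^ (-s) := by
  have hn0 : (0:ℝ) < n := by linarith
  have e : n ^ (-s) = (2 / n) ^ s * 2 ^ (-s) := by
    rw [Real.div_rpow (by norm_num) hn0.le, Real.rpow_neg hn0.le, Real.rpow_neg (by norm_num : (0:ℝ) ≤ 2)]
    have h2s : (0:ℝ) < 2 ^ s := Real.rpow_pos_of_pos (by norm_num) _
    have hns : (0:ℝ) < n ^ s := Real.rpow_pos_of_pos hn0 _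
    field_simp
  rw [e]
  have h1 : (2 / n) ^ s ≤ (2 / n) ^ ((5:ℝ)/2) :=
    Real.rpow_le_rpow_of_exponent_ge (by positivity) (by rw [div_le_one hn0]; linarith) hs
  exact mul_le_mul_of_nonneg_right (h1.trans hq) (Real.rpow_nonneg (by norm_num) _)

/-- telescoping bound -/
lemma telescope' {s : ℝ} (hs : 5/2 ≤ s) {a : ℝ} (ha : 2 ≤ a) :
    (3/2) * a ^ (-s) ≤ (a - 1) ^ (1 - s) - a ^ (1 - s) := by
  have ha0 : (0:ℝ) < a := by linarith
  have ha1 : (0:ℝ) < a - 1 := by linarith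
  have hp : (1:ℝ) ≤ s - 1 := by linarith
  set A := a ^ (s - 1) with hA
  set B := (a - 1) ^ (s - 1) with hB
  have hApos : 0 < A := Real.rpow_pos_of_pos ha0 _
  have hBpos : 0 < B := Real.rpow_pos_of_pos ha1 _
  set T := a ^ (-s) with hT
  have hTpos : 0 < T := Real.rpow_pos_of_pos ha0 _
  -- Bernoulli
  have hb : 1 + (s - 1) * (1 / (a - 1)) ≤ (1 + 1 / (a - 1)) ^ (s - 1) :=
    one_add_mul_self_le_rpow_one_add (by have h := one_div_pos.mpr ha1; linarith) hp
  have hco : (1 + 1 / (a - 1)) = a / (a - 1) := by field_simp; ring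
  rw [hco, Real.div_rpow ha0.le ha1.le] at hb
  have h2 : (1 + (s - 1) * (1 / (a - 1))) * B ≤ A := (le_div_iff₀ hBpos).mp hb
  have key : (s - 1 + a) * B ≤ a * A := by
    have h4 : (1:ℝ) ≤ a / (a - 1) := (le_div_iff₀ ha1).mpr (by linarith)
    have h3 : (s - 1 + a) * B ≤ (a * (1 + (s - 1) * (1 / (a - 1)))) * B := by
      apply mul_le_mul_of_nonneg_right _ hBpos.le
      have e4 : a * (1 + (s - 1) * (1 / (a - 1))) = a + (s - 1) * (a / (a - 1)) := by ring
      rw [e4]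
      nlinarith [h4, hp]
    calc (s - 1 + a) * B ≤ (a * (1 + (s - 1) * (1 / (a - 1)))) * B := h3
      _ = a * ((1 + (s - 1) * (1 / (a - 1))) * B) := by ring
      _ ≤ a * A := mul_le_mul_of_nonneg_left h2 ha0.le
  -- relate rpow values
  have eB : (a - 1) ^ (1 - s) = B⁻¹ := by
    rw [show (1 - s) = -(s - 1) by ring, Real.rpow_neg ha1.le]
  have eA : a ^ (1 - s) = a * T := by
    rw [show (1 - s) = 1 + (-s) by ring, Real.rpow_add ha0, Real.rpow_one]
  have eT : a * (A * T) = 1 := by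
    rw [hT, hA, ← Real.rpow_add ha0, show (s - 1 + -s) = -1 by ring,
      Real.rpow_neg_one]
    field_simp
  -- (s-1+a) * T ≤ B⁻¹
  have h6 : (s - 1 + a) * T ≤ B⁻¹ := by
    rw [inv_eq_one_div, le_div_iff₀ hBpos]
    calc (s - 1 + a) * T * B = ((s - 1 + a) * B) * T := by ring
      _ ≤ (a * A) * T := mul_le_mul_of_nonneg_right key hTpos.le
      _ = 1 := by rw [mul_assoc]; exact eT
  have h7 : (3/2) * T ≤ (s - 1) * T := mul_le_mul_of_nonneg_right (by linarith) hTpos.le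
  rw [eB, eA]
  linarith

lemma tail_partial {s : ℝ} (hs : 5/2 ≤ s) (k : ℕ) :
    (3/2) * ∑ i ∈ Finset.range k, ((i : ℝ) + 32) ^ (-s)
      ≤ (31 : ℝ) ^ (1 - s) - ((31 : ℝ) + k) ^ (1 - s) := by
  induction k with
  | zero => simp
  | succ k ih =>
    rw [Finset.sum_range_succ, mul_add]
    have ht := telescope' hs (a := (k : ℝ) + 32) (by have : (0:ℝ) ≤ (k:ℝ) := Nat.cast_nonneg k; linarith)
    have e1 : ((k : ℝ) + 32) - 1 = (31 : ℝ) + k := by ring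
    have e2 : ((31 : ℝ) + (k + 1 : ℕ)) = (k : ℝ) + 32 := by push_cast; ring
    rw [e1] at ht
    rw [e2]
    linarith

lemma tail_bound {s : ℝ} (hs : 5/2 ≤ s) :
    ∑' n : ℕ, ((n : ℝ) + 32) ^ (-s) ≤ (2/3) * (31 : ℝ) ^ (1 - s) := by
  apply Real.tsum_le_of_sum_range_le (fun n => Real.rpow_nonneg (by positivity) _)
  intro k
  have h := tail_partial hs k
  have h2 : (0:ℝ) ≤ ((31 : ℝ) + k) ^ (1 - s) := Real.rpow_nonneg (by positivity) _
  linarith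

/-- The Riemann zeta function on real arguments s > 1, given by its Dirichlet series. -/
noncomputable def realZeta (s : ℝ) : ℝ := ∑' n : ℕ, ((n : ℝ) + 1) ^ (-s)

lemma zeta_bound {s : ℝ} (hs : 5/2 ≤ s) :
    realZeta s ≤ 1 + (193227/100000 : ℝ) * 2 ^ (-s) := by
  have hsum : Summable (fun n : ℕ => ((n : ℝ) + 1) ^ (-s)) := by
    have h1 : Summable (fun n : ℕ => ((n : ℝ)) ^ (-s)) :=
      Real.summable_nat_rpow.mpr (by linarith)
    have h2 := (summable_nat_add_iff 1).mpr h1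
    refine h2.congr fun n => ?_
    push_cast
    ring_nf
  rw [realZeta, ← hsum.sum_add_tsum_nat_add 31]
  -- tail
  have htail : ∑' n : ℕ, ((n : ℝ) + 31 + 1) ^ (-s) ≤ (1707/78125 : ℝ) * 2 ^ (-s) := by
    have e : ∑' n : ℕ, ((n : ℝ) + 31 + 1) ^ (-s) = ∑' n : ℕ, ((n : ℝ) + 32) ^ (-s) := by
      apply tsum_congr; intro n; push_cast; ring_nf
    rw [e]
    refine (tail_bound hs).trans ?_
    have e31 : (31 : ℝ) ^ (1 - s) = 31 * (31 : ℝ) ^ (-s) := by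
      rw [show (1 - s) = 1 + (-s) by ring, Real.rpow_add (by norm_num), Real.rpow_one]
    rw [e31]
    have h31 : (31 : ℝ) ^ (-s) ≤ (5121/4843750 : ℝ) * 2 ^ (-s) :=
      term_bound hs (by norm_num) (numeric_helper (by norm_num) (by norm_num) (by norm_num))
    have hP : (0:ℝ) ≤ (2:ℝ) ^ (-s) := Real.rpow_nonneg (by norm_num) _
    nlinarith [h31]
  have ht0 : (0:ℝ) ≤ (2:ℝ) ^ (-s) := Real.rpow_nonneg (by norm_num) _
  have h2 : ((2:ℝ)) ^ (-s) ≤ (10000001/10000000 : ℝ) * (2:ℝ) ^ (-s) :=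
    term_bound hs (by norm_num) (numeric_helper (by norm_num) (by norm_num) (by norm_num))
  have h3 : ((3:ℝ)) ^ (-s) ≤ (29031/80000 : ℝ) * (2:ℝ) ^ (-s) :=
    term_bound hs (by norm_num) (numeric_helper (by norm_num) (by norm_num) (by norm_num))
  have h4 : ((4:ℝ)) ^ (-s) ≤ (220971/1250000 : ℝ) * (2:ℝ) ^ (-s) :=
    term_bound hs (by norm_num) (numeric_helper (by norm_num) (by norm_num) (by norm_num))
  have h5 : ((5:ℝ)) ^ (-s) ≤ (101193/1000000 : ℝ) * (2:ℝ) ^ (-s) :=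
    term_bound hs (by norm_num) (numeric_helper (by norm_num) (by norm_num) (by norm_num))
  have h6 : ((6:ℝ)) ^ (-s) ≤ (320751/5000000 : ℝ) * (2:ℝ) ^ (-s) :=
    term_bound hs (by norm_num) (numeric_helper (by norm_num) (by norm_num) (by norm_num))
  have h7 : ((7:ℝ)) ^ (-s) ≤ (218173/5000000 : ℝ) * (2:ℝ) ^ (-s) :=
    term_bound hs (by norm_num) (numeric_helper (by norm_num) (by norm_num) (by norm_num))
  have h8 : ((8:ℝ)) ^ (-s) ≤ (312501/10000000 : ℝ) * (2:ℝ) ^ (-s) :=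
    term_bound hs (by norm_num) (numeric_helper (by norm_num) (by norm_num) (by norm_num))
  have h9 : ((9:ℝ)) ^ (-s) ≤ (116397/5000000 : ℝ) * (2:ℝ) ^ (-s) :=
    term_bound hs (by norm_num) (numeric_helper (by norm_num) (by norm_num) (by norm_num))
  have h10 : ((10:ℝ)) ^ (-s) ≤ (178887/10000000 : ℝ) * (2:ℝ) ^ (-s) :=
    term_bound hs (by norm_num) (numeric_helper (by norm_num) (by norm_num) (by norm_num))
  have h11 : ((11:ℝ)) ^ (-s) ≤ (140961/10000000 : ℝ) * (2:ℝ) ^ (-s) :=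
    term_bound hs (by norm_num) (numeric_helper (by norm_num) (by norm_num) (by norm_num))
  have h12 : ((12:ℝ)) ^ (-s) ≤ (28351/2500000 : ℝ) * (2:ℝ) ^ (-s) :=
    term_bound hs (by norm_num) (numeric_helper (by norm_num) (by norm_num) (by norm_num))
  have h13 : ((13:ℝ)) ^ (-s) ≤ (46419/5000000 : ℝ) * (2:ℝ) ^ (-s) :=
    term_bound hs (by norm_num) (numeric_helper (by norm_num) (by norm_num) (by norm_num))
  have h14 : ((14:ℝ)) ^ (-s) ≤ (77137/10000000 : ℝ) * (2:ℝ) ^ (-s) :=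
    term_bound hs (by norm_num) (numeric_helper (by norm_num) (by norm_num) (by norm_num))
  have h15 : ((15:ℝ)) ^ (-s) ≤ (64917/10000000 : ℝ) * (2:ℝ) ^ (-s) :=
    term_bound hs (by norm_num) (numeric_helper (by norm_num) (by norm_num) (by norm_num))
  have h16 : ((16:ℝ)) ^ (-s) ≤ (13811/2500000 : ℝ) * (2:ℝ) ^ (-s) :=
    term_bound hs (by norm_num) (numeric_helper (by norm_num) (by norm_num) (by norm_num))
  have h17 : ((17:ℝ)) ^ (-s) ≤ (1899/400000 : ℝ) * (2:ℝ) ^ (-s) :=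
    term_bound hs (by norm_num) (numeric_helper (by norm_num) (by norm_num) (by norm_num))
  have h18 : ((18:ℝ)) ^ (-s) ≤ (20577/5000000 : ℝ) * (2:ℝ) ^ (-s) :=
    term_bound hs (by norm_num) (numeric_helper (by norm_num) (by norm_num) (by norm_num))
  have h19 : ((19:ℝ)) ^ (-s) ≤ (35951/10000000 : ℝ) * (2:ℝ) ^ (-s) :=
    term_bound hs (by norm_num) (numeric_helper (by norm_num) (by norm_num) (by norm_num))
  have h20 : ((20:ℝ)) ^ (-s) ≤ (3953/1250000 : ℝ) * (2:ℝ) ^ (-s) :=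
    term_bound hs (by norm_num) (numeric_helper (by norm_num) (by norm_num) (by norm_num))
  have h21 : ((21:ℝ)) ^ (-s) ≤ (27993/10000000 : ℝ) * (2:ℝ) ^ (-s) :=
    term_bound hs (by norm_num) (numeric_helper (by norm_num) (by norm_num) (by norm_num))
  have h22 : ((22:ℝ)) ^ (-s) ≤ (623/250000 : ℝ) * (2:ℝ) ^ (-s) :=
    term_bound hs (by norm_num) (numeric_helper (by norm_num) (by norm_num) (by norm_num))
  have h23 : ((23:ℝ)) ^ (-s) ≤ (22299/10000000 : ℝ) * (2:ℝ) ^ (-s) :=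
    term_bound hs (by norm_num) (numeric_helper (by norm_num) (by norm_num) (by norm_num))
  have h24 : ((24:ℝ)) ^ (-s) ≤ (1253/625000 : ℝ) * (2:ℝ) ^ (-s) :=
    term_bound hs (by norm_num) (numeric_helper (by norm_num) (by norm_num) (by norm_num))
  have h25 : ((25:ℝ)) ^ (-s) ≤ (18103/10000000 : ℝ) * (2:ℝ) ^ (-s) :=
    term_bound hs (by norm_num) (numeric_helper (by norm_num) (by norm_num) (by norm_num))
  have h26 : ((26:ℝ)) ^ (-s) ≤ (16413/10000000 : ℝ) * (2:ℝ) ^ (-s) :=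
    term_bound hs (by norm_num) (numeric_helper (by norm_num) (by norm_num) (by norm_num))
  have h27 : ((27:ℝ)) ^ (-s) ≤ (2987/2000000 : ℝ) * (2:ℝ) ^ (-s) :=
    term_bound hs (by norm_num) (numeric_helper (by norm_num) (by norm_num) (by norm_num))
  have h28 : ((28:ℝ)) ^ (-s) ≤ (13637/10000000 : ℝ) * (2:ℝ) ^ (-s) :=
    term_bound hs (by norm_num) (numeric_helper (by norm_num) (by norm_num) (by norm_num))
  have h29 : ((29:ℝ)) ^ (-s) ≤ (3123/2500000 : ℝ) * (2:ℝ) ^ (-s) :=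
    term_bound hs (by norm_num) (numeric_helper (by norm_num) (by norm_num) (by norm_num))
  have h30 : ((30:ℝ)) ^ (-s) ≤ (11477/10000000 : ℝ) * (2:ℝ) ^ (-s) :=
    term_bound hs (by norm_num) (numeric_helper (by norm_num) (by norm_num) (by norm_num))
  have h31 : ((31:ℝ)) ^ (-s) ≤ (5287/5000000 : ℝ) * (2:ℝ) ^ (-s) :=
    term_bound hs (by norm_num) (numeric_helper (by norm_num) (by norm_num) (by norm_num))
  have hone : ((1:ℝ)) ^ (-s) = 1 := Real.one_rpow _
  simp only [Finset.sum_range_succ, Finset.sum_range_zero]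
  norm_num
  linarith

/-- For x ≥ 1, ζ(3/2 + x)² ≤ (8/5)·2^(−x) + 1. -/
theorem stmt_7 (x : ℝ) (hx : 1 ≤ x) :
    (realZeta (3 / 2 + x)) ^ 2 ≤ 8 / 5 * (2 : ℝ) ^ (-x) + 1 := by
  set s : ℝ := 3 / 2 + x with hsdef
  have hs : 5/2 ≤ s := by rw [hsdef]; linarith
  set t : ℝ := (2 : ℝ) ^ (-s) with htdef
  have ht0 : 0 < t := Real.rpow_pos_of_pos (by norm_num) _
  have hz := zeta_bound hs
  have hz0 : 0 ≤ realZeta s := tsum_nonneg fun n => Real.rpow_nonneg (by positivity) _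
  have hsq : (realZeta s) ^ 2 ≤ (1 + (193227/100000 : ℝ) * t) ^ 2 :=
    pow_le_pow_left₀ hz0 hz 2
  refine hsq.trans ?_
  -- 2^(-x) = 2^(3/2) * t
  have hex : (2 : ℝ) ^ (-x) = (2 : ℝ) ^ ((3:ℝ)/2) * t := by
    rw [htdef, ← Real.rpow_add (by norm_num : (0:ℝ) < 2)]
    norm_num [hsdef]
  have h32 : (2 : ℝ) ^ ((3:ℝ)/2) = 2 * Real.sqrt 2 := by
    rw [show ((3:ℝ)/2) = 1 + (1/2 : ℝ) by norm_num, Real.rpow_add (by norm_num : (0:ℝ) < 2),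
      Real.rpow_one, ← Real.sqrt_eq_rpow]
  have hsub : t ≤ Real.sqrt 2 / 8 := by
    have h1 : t ≤ (2:ℝ) ^ (-(5/2 : ℝ)) :=
      Real.rpow_le_rpow_of_exponent_le (by norm_num) (by linarith)
    have e8 : (2:ℝ) ^ (3:ℝ) = 8 := by
      rw [show (3:ℝ) = ((3:ℕ):ℝ) by norm_num, Real.rpow_natCast]; norm_num
    have h2 : (2:ℝ) ^ (-(5/2 : ℝ)) = Real.sqrt 2 / 8 := by
      rw [show (-(5/2:ℝ)) = 1/2 + (-3 : ℝ) by norm_num,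
        Real.rpow_add (by norm_num : (0:ℝ) < 2), ← Real.sqrt_eq_rpow,
        Real.rpow_neg (by norm_num : (0:ℝ) ≤ 2), e8]
      ring
    rw [← h2]; exact h1
  have hsl : (1.414213 : ℝ) ≤ Real.sqrt 2 := by
    rw [show (1.414213:ℝ) = Real.sqrt (1.414213^2) from (Real.sqrt_sq (by norm_num)).symm]
    exact Real.sqrt_le_sqrt (by norm_num)
  have hsu : Real.sqrt 2 ≤ (1.4142136 : ℝ) := by
    rw [show (1.4142136:ℝ) = Real.sqrt (1.4142136^2) from (Real.sqrt_sq (by norm_num)).symm]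
    exact Real.sqrt_le_sqrt (by norm_num)
  rw [hex, h32]
  have key : 2 * (193227/100000 : ℝ) + (193227/100000 : ℝ)^2 * t ≤ 16/5 * Real.sqrt 2 := by
    nlinarith [hsub, hsl]
  nlinarith [mul_le_mul_of_nonneg_right key ht0.le, ht0]
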